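/- On (ℝ³, ‖·‖₂), let T be the diagonal operator with diagonal entries (1, 1/2, 1/2) and A the diagonal operator with diagonal entries (0, 1, 0). Then T ⊥_B A but A is not Birkhoff-James orthogonal to T. -/

import Mathlib

lemma coord_le_norm3 (v : EuclideanSpace ℝ (Fin 3)) (i : Fin 3) : |v i| ≤ ‖v‖ := by
  rw [EuclideanSpace.norm_eq]
  have h1 : |v i| = Real.sqrt (‖v i‖ ^ 2) := by
    rw [Real.sqrt_sq_eq_abs]; simp [abs_abs]
  rw [h1]
  apply Real.sqrt_le_sqrt
  exact Finset.single_le_sum (f := fun j => ‖v j‖ ^ 2) (fun j _ => by positivity)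
    (Finset.mem_univ i)

lemma norm_le_of_coord3 (v w : EuclideanSpace ℝ (Fin 3)) (c : ℝ) (hc : 0 ≤ c)
    (h : ∀ i, |w i| ≤ c * |v i|) : ‖w‖ ≤ c * ‖v‖ := by
  rw [EuclideanSpace.norm_eq, EuclideanSpace.norm_eq]
  rw [show c * Real.sqrt (∑ i, ‖v i‖ ^ 2) = Real.sqrt (c ^ 2 * ∑ i, ‖v i‖ ^ 2) by
    rw [Real.sqrt_mul (by positivity), Real.sqrt_sq hc]]
  apply Real.sqrt_le_sqrt
  rw [Finset.mul_sum]
  apply Finset.sum_le_sum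
  intro i _
  have := h i
  have h2 : ‖w i‖ ^ 2 ≤ (c * |v i|) ^ 2 := by
    rw [Real.norm_eq_abs]
    exact pow_le_pow_left₀ (abs_nonneg _) this 2
  calc ‖w i‖ ^ 2 ≤ (c * |v i|) ^ 2 := h2
    _ = c ^ 2 * ‖v i‖ ^ 2 := by rw [Real.norm_eq_abs]; ring

def OpBJOrth {X : Type*} [NormedAddCommGroup X] [NormedSpace ℝ X]
    (T A : X →L[ℝ] X) : Prop :=
  ∀ lam : ℝ, ‖T + lam • A‖ ≥ ‖T‖

theorem diag_example_not_symmetric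
    (T A : EuclideanSpace ℝ (Fin 3) →L[ℝ] EuclideanSpace ℝ (Fin 3))
    (hT : ∀ v : EuclideanSpace ℝ (Fin 3),
      T v 0 = v 0 ∧ T v 1 = (1/2) * v 1 ∧ T v 2 = (1/2) * v 2)
    (hA : ∀ v : EuclideanSpace ℝ (Fin 3),
      A v 0 = 0 ∧ A v 1 = v 1 ∧ A v 2 = 0) :
    OpBJOrth T A ∧ ¬ OpBJOrth A T := by
  have hTnorm : ‖T‖ ≤ 1 := by
    apply ContinuousLinearMap.opNorm_le_bound _ zero_le_one
    intro v
    rw [one_mul]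
    have := norm_le_of_coord3 v (T v) 1 zero_le_one ?_
    · simpa using this
    intro i
    obtain ⟨h0, h1, h2⟩ := hT v
    fin_cases i <;> simp [h0, h1, h2, abs_mul]
    · linarith [abs_nonneg (v 1)]
    · linarith [abs_nonneg (v 2)]
  have hAnorm : (1:ℝ) ≤ ‖A‖ := by
    have he : ‖EuclideanSpace.single (1 : Fin 3) (1:ℝ)‖ = 1 := by
      rw [EuclideanSpace.norm_single]; simp
    have h1 := coord_le_norm3 (A (EuclideanSpace.single (1 : Fin 3) (1:ℝ))) 1
    obtain ⟨_, hc, _⟩ := hA (EuclideanSpace.single (1 : Fin 3) (1:ℝ))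
    rw [hc] at h1
    simp [EuclideanSpace.single_apply] at h1
    calc (1:ℝ) ≤ ‖A (EuclideanSpace.single (1 : Fin 3) (1:ℝ))‖ := h1
      _ ≤ ‖A‖ * ‖EuclideanSpace.single (1 : Fin 3) (1:ℝ)‖ := A.le_opNorm _
      _ = ‖A‖ := by rw [he, mul_one]
  constructor
  · intro lam
    have he : ‖EuclideanSpace.single (0 : Fin 3) (1:ℝ)‖ = 1 := by
      rw [EuclideanSpace.norm_single]; simp
    set e := EuclideanSpace.single (0 : Fin 3) (1:ℝ) with hedef
    have h1 := coord_le_norm3 ((T + lam • A) e) 0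
    have hcoord : ((T + lam • A) e) 0 = 1 := by
      obtain ⟨h0, _, _⟩ := hT e
      obtain ⟨a0, _, _⟩ := hA e
      simp [ContinuousLinearMap.add_apply, ContinuousLinearMap.smul_apply,
        PiLp.add_apply, PiLp.smul_apply, smul_eq_mul, h0, a0, hedef,
        EuclideanSpace.single_apply]
      rw [← hedef, h0, a0, hedef]; simp
    rw [hcoord] at h1
    simp at h1
    have h2 : ‖(T + lam • A) e‖ ≤ ‖T + lam • A‖ := by
      calc ‖(T + lam • A) e‖ ≤ ‖T + lam • A‖ * ‖e‖ := (T + lam • A).le_opNorm _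
        _ = ‖T + lam • A‖ := by rw [he, mul_one]
    calc ‖T‖ ≤ 1 := hTnorm
      _ ≤ ‖(T + lam • A) e‖ := h1
      _ ≤ ‖T + lam • A‖ := h2
  · intro h
    have hspec := h (-(1/2))
    have hub : ‖A + (-(1/2) : ℝ) • T‖ ≤ 3/4 := by
      apply ContinuousLinearMap.opNorm_le_bound _ (by norm_num)
      intro v
      apply norm_le_of_coord3 v _ (3/4) (by norm_num)
      intro i
      obtain ⟨t0, t1, t2⟩ := hT v
      obtain ⟨a0, a1, a2⟩ := hA v
      have happ : ∀ j, ((A + (-(1/2) : ℝ) • T) v) j = A v j + (-(1/2)) * T v j := by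
        intro j
        simp [ContinuousLinearMap.add_apply, ContinuousLinearMap.smul_apply,
          PiLp.add_apply, PiLp.smul_apply, smul_eq_mul]
      fin_cases i <;> rw [happ] <;> simp [t0, t1, t2, a0, a1, a2]
      · linarith [abs_nonneg (v 0)]
      · rw [show v 1 + -((2:ℝ)⁻¹ * (2⁻¹ * v 1)) = (3/4) * v 1 by ring, abs_mul,
          show |(3/4:ℝ)| = 3/4 from by norm_num]
      · linarith [abs_nonneg (v 2)]
    have : (1:ℝ) ≤ 3/4 := le_trans hAnorm (le_trans hspec hub)
    norm_num at this
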